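/- There exists D such that for every integer d ≥ D the following holds in the circular-arc construction with n = d²: every integral arc s of the circle of length at least d − 1 contains at least d/5 integer points that are starting points of arcs in R, and also at least d/5 integer points that are ending points of arcs in R. -/

import Mathlib

/-- `x` modulo `m`, for real numbers. -/
noncomputable def rmod (x m : ℝ) : ℝ := x - m * ⌊x / m⌋

/-- The circumference `n = d²` of the circle of the construction. -/
def circum (d : ℕ) : ℝ := (d : ℝ) ^ 2

/-- The real representative `i·d + j` of the integer point `(i,j)_d`. -/
def ipt (d i j : ℕ) : ℝ := (i : ℝ) * d + j

/-- The arc `[a,b]` of the circle of circumference `m`, where `a, b` are the images of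
the reals `x, y`: the image of the interval `[x, x + ((y − x) mod m)]`. -/
noncomputable def arcCC (m x y : ℝ) : Set (AddCircle m) :=
  (fun t : ℝ => (t : AddCircle m)) '' Set.Icc x (x + rmod (y - x) m)

/-- The length of the arc `[a,b]`, namely `(y − x) mod m`. -/
noncomputable def arcLen (m x y : ℝ) : ℝ := rmod (y - x) m

/-- Indices `(i,j)`, `0 ≤ i,j < d`, `i ≠ j`, of the arcs `[(i,j)_d, (j,i)_d]` of the
construction having length at most `n/4`. -/
noncomputable def RIdx (d : ℕ) : Set (ℕ × ℕ) :=
  {q | q.1 < d ∧ q.2 < d ∧ q.1 ≠ q.2 ∧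
    arcLen (circum d) (ipt d q.1 q.2) (ipt d q.2 q.1) ≤ circum d / 4}

/-- The arc `[(i,j)_d, (j,i)_d]` indexed by `q = (i,j)`. -/
noncomputable def arcR (d : ℕ) (q : ℕ × ℕ) : Set (AddCircle (circum d)) :=
  arcCC (circum d) (ipt d q.1 q.2) (ipt d q.2 q.1)

/-- The set of starting points of arcs in `R`. -/
noncomputable def startPts (d : ℕ) : Set (AddCircle (circum d)) :=
  {p | ∃ q ∈ RIdx d, p = ((ipt d q.1 q.2 : ℝ) : AddCircle (circum d))}

/-- The set of ending points of arcs in `R`. -/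
noncomputable def endPts (d : ℕ) : Set (AddCircle (circum d)) :=
  {p | ∃ q ∈ RIdx d, p = ((ipt d q.2 q.1 : ℝ) : AddCircle (circum d))}

/-- The intersection graph `G_R` of the arcs of the construction. -/
noncomputable def GR (d : ℕ) : SimpleGraph (RIdx d) where
  Adj q q' := q ≠ q' ∧ (arcR d q ∩ arcR d q').Nonempty
  symm := ⟨by
    rintro q q' ⟨h1, h2⟩
    exact ⟨h1.symm, by rwa [Set.inter_comm]⟩⟩
  loopless := ⟨fun q h => h.1 rfl⟩

/-- for all large enough `d`, every integral arc of the circle of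
circumference `d²` of length at least `d − 1` contains at least `d/5` integer points
that are starting points of arcs in `R`, and at least `d/5` integer points that are
ending points of arcs in `R`. -/

lemma rmod_coe (a b : ℤ) (hb : 0 < b) : rmod (a : ℝ) (b : ℝ) = ((a % b : ℤ) : ℝ) := by
  have hb' : (0:ℝ) < (b:ℝ) := by exact_mod_cast hb
  have key : (a:ℝ) = (b:ℝ) * ((a / b : ℤ):ℝ) + ((a % b : ℤ):ℝ) := by
    exact_mod_cast (Int.mul_ediv_add_emod a b).symm
  have hnn : (0:ℝ) ≤ ((a % b : ℤ):ℝ) := by exact_mod_cast Int.emod_nonneg a (ne_of_gt hb)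
  have hlt : ((a % b : ℤ):ℝ) < (b:ℝ) := by exact_mod_cast Int.emod_lt_of_pos a hb
  have hfloor : ⌊(a : ℝ) / (b : ℝ)⌋ = a / b := by
    rw [Int.floor_eq_iff]
    constructor
    · rw [le_div_iff₀ hb']; nlinarith
    · rw [div_lt_iff₀ hb']; nlinarith
  rw [rmod, hfloor]; linarith

lemma coe_eq_coe_circ (d : ℕ) (a b : ℝ) :
    ((a : AddCircle (circum d)) = (b : AddCircle (circum d))) ↔ ∃ z : ℤ, a - b = z * circum d := by
  rw [QuotientAddGroup.eq_iff_sub_mem, AddSubgroup.mem_zmultiples_iff]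
  constructor
  · rintro ⟨z, hz⟩; exact ⟨z, by rw [← hz, zsmul_eq_mul]⟩
  · rintro ⟨z, hz⟩; exact ⟨z, by rw [zsmul_eq_mul, ← hz]⟩

lemma countCore (d : ℕ) (hd : 200 ≤ d) (x y : ℤ)
    (hlen : (d:ℤ) - 1 ≤ (y - x) % ((d:ℤ)^2))
    (P : Set (AddCircle (circum d))) (hP : P.Finite)
    (lo hi : ℤ) (hlo : 1 ≤ lo) (hhi : hi ≤ (d:ℤ) - 1)
    (hcard : (d:ℤ) ≤ 5 * (hi - lo))
    (hmem : ∀ w : ℤ, 0 ≤ w → w < (d:ℤ)^2 → lo - 1 ≤ w % ((d:ℤ)+1) → w % ((d:ℤ)+1) ≤ hi →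
      (((w : ℤ) : ℝ) : AddCircle (circum d)) ∈ P) :
    (d : ℝ) / 5 ≤ ((P ∩ arcCC (circum d) (x : ℝ) (y : ℝ)).ncard : ℝ) := by
  have hd1 : (1:ℤ) ≤ (d:ℤ) := by omega
  set n : ℤ := (d:ℤ)^2 with hn_def
  have hn : 0 < n := by positivity
  have hnd : (d:ℤ) ≤ n := by nlinarith
  have hcirc : circum d = ((n : ℤ) : ℝ) := by rw [hn_def, circum]; push_cast; ring
  have hm : (0:ℤ) < (d:ℤ) + 1 := by omega
  set v0 : ℤ := x % n with hv0_def
  have hv0 : 0 ≤ v0 ∧ v0 < n := ⟨Int.emod_nonneg x (ne_of_gt hn), Int.emod_lt_of_pos x hn⟩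
  set L : ℤ := (y - x) % n with hL_def
  have hL : ((d:ℤ) - 1 ≤ L) ∧ L < n := ⟨hlen, Int.emod_lt_of_pos _ hn⟩
  set t : ℤ → ℤ := fun r => (r - v0) % ((d:ℤ)+1) with ht_def
  set rbad : ℤ := (v0 + d) % ((d:ℤ)+1) with hrbad_def
  set F : Finset ℤ := (Finset.Icc lo hi).erase rbad with hF_def
  have hIccF : ∀ r ∈ F, lo ≤ r ∧ r ≤ hi := by
    intro r hr
    rw [hF_def, Finset.mem_erase, Finset.mem_Icc] at hr
    exact hr.2
  have hres : ∀ r, lo ≤ r → r ≤ hi → (v0 + t r) % ((d:ℤ)+1) = r := by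
    intro r h1 h2
    have e1 : (v0 + t r) % ((d:ℤ)+1) = (v0 + (r - v0)) % ((d:ℤ)+1) := by
      conv_rhs => rw [Int.add_emod]
      rw [Int.add_emod, Int.emod_emod_of_dvd _ dvd_rfl]
    rw [e1, show v0 + (r - v0) = r by ring]
    exact Int.emod_eq_of_lt (by omega) (by omega)
  have ht0 : ∀ r, 0 ≤ t r := fun r => Int.emod_nonneg _ (ne_of_gt hm)
  have htd : ∀ r ∈ F, t r ≤ (d:ℤ) - 1 := by
    intro r hr
    have hr2 := hIccF r hr
    rw [hF_def, Finset.mem_erase] at hr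
    have hlt : t r < (d:ℤ) + 1 := Int.emod_lt_of_pos _ hm
    by_contra hcon
    have htr : t r = d := by omega
    apply hr.1
    have h2 : rbad = (v0 + t r) % ((d:ℤ)+1) := by rw [htr]
    rw [hres r hr2.1 hr2.2] at h2
    exact h2.symm
  set f : ℤ → AddCircle (circum d) := fun r => (((v0 + t r : ℤ) : ℝ) : AddCircle (circum d)) with hf_def
  -- arc membership
  have harc : ∀ r ∈ F, f r ∈ arcCC (circum d) (x : ℝ) (y : ℝ) := by
    intro r hr
    refine ⟨((x + t r : ℤ) : ℝ), ?_, ?_⟩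
    · have hrm : rmod ((y:ℝ) - (x:ℝ)) (circum d) = ((L : ℤ) : ℝ) := by
        rw [hcirc, show ((y:ℝ) - (x:ℝ)) = (((y - x : ℤ)) : ℝ) by push_cast; ring,
          rmod_coe _ _ hn, hL_def]
      rw [hrm]
      constructor
      · exact_mod_cast (by linarith [ht0 r] : x ≤ x + t r)
      · have h1 : x + t r ≤ x + L := by linarith [htd r hr, hL.1]
        calc ((x + t r : ℤ):ℝ) ≤ ((x + L : ℤ):ℝ) := by exact_mod_cast h1
          _ = (x:ℝ) + ((L:ℤ):ℝ) := by push_cast; ring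
    · rw [coe_eq_coe_circ]
      refine ⟨x / n, ?_⟩
      rw [hcirc]
      have h1 : x % n = x - n * (x / n) := Int.emod_def x n
      have h2 : (x + t r) - (v0 + t r) = (x / n) * n := by
        rw [hv0_def, h1]; ring
      exact_mod_cast congrArg (Int.cast : ℤ → ℝ) h2
  -- P membership
  have hPmem : ∀ r ∈ F, f r ∈ P := by
    intro r hr
    have hrIcc := hIccF r hr
    set w : ℤ := (v0 + t r) % n with hw_def
    have hw0 : 0 ≤ w := Int.emod_nonneg _ (ne_of_gt hn)
    have hwn : w < n := Int.emod_lt_of_pos _ hn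
    have hrr : (v0 + t r) % ((d:ℤ)+1) = r := hres r hrIcc.1 hrIcc.2
    have hsum : 0 ≤ v0 + t r ∧ v0 + t r < n + n := by
      constructor
      · linarith [hv0.1, ht0 r]
      · have := htd r hr; omega
    have hwres : lo - 1 ≤ w % ((d:ℤ)+1) ∧ w % ((d:ℤ)+1) ≤ hi := by
      by_cases hc : v0 + t r < n
      · have he : w = v0 + t r := Int.emod_eq_of_lt hsum.1 hc
        rw [he, hrr]; omega
      · have hwe : w = v0 + t r - n := by
          have h9 : (v0 + t r) % n = (v0 + t r - n) % n := by
            conv_lhs => rw [show v0 + t r = (v0 + t r - n) + n * 1 by ring]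
            rw [Int.add_mul_emod_self_left]
          rw [hw_def, h9]
          exact Int.emod_eq_of_lt (by omega) (by omega)
        have e2 : w = (v0 + t r - 1) + ((d:ℤ)+1) * (-((d:ℤ)-1)) := by
          rw [hwe, hn_def]; ring
        rw [e2, Int.add_mul_emod_self_left]
        have q := Int.emod_def (v0 + t r) ((d:ℤ)+1)
        rw [hrr] at q
        have e3 : v0 + t r - 1 = (r - 1) + ((d:ℤ)+1) * ((v0 + t r) / ((d:ℤ)+1)) := by linarith
        rw [e3, Int.add_mul_emod_self_left, Int.emod_eq_of_lt (by omega) (by omega)]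
        omega
    have hwP := hmem w hw0 hwn hwres.1 hwres.2
    have heq : (((w : ℤ) : ℝ) : AddCircle (circum d)) = f r := by
      rw [hf_def]
      simp only
      rw [coe_eq_coe_circ]
      refine ⟨-((v0 + t r) / n), ?_⟩
      rw [hcirc]
      have h1 : (v0 + t r) % n = (v0 + t r) - n * ((v0 + t r) / n) := Int.emod_def _ _
      have h2 : w - (v0 + t r) = (-((v0 + t r) / n)) * n := by rw [hw_def, h1]; ring
      exact_mod_cast congrArg (Int.cast : ℤ → ℝ) h2
    rwa [heq] at hwP
  -- injectivity
  have hinj : Set.InjOn f F := by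
    intro r hr r' hr' hfeq
    have hrIcc := hIccF r (Finset.mem_coe.mp hr)
    have hrIcc' := hIccF r' (Finset.mem_coe.mp hr')
    rw [hf_def] at hfeq
    simp only at hfeq
    rw [coe_eq_coe_circ] at hfeq
    obtain ⟨z, hz⟩ := hfeq
    rw [hcirc] at hz
    have hz2 : ((t r - t r' : ℤ):ℝ) = ((z * n : ℤ):ℝ) := by push_cast; push_cast at hz; linarith
    have hz' : t r - t r' = z * n := by exact_mod_cast hz2
    have hb1 := ht0 r
    have hb2 := ht0 r'
    have hb3 := htd r (Finset.mem_coe.mp hr)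
    have hb4 := htd r' (Finset.mem_coe.mp hr')
    have hz0 : z = 0 := by
      rcases lt_trichotomy z 0 with h | h | h
      · nlinarith
      · exact h
      · nlinarith
    have he : t r = t r' := by rw [hz0] at hz'; omega
    have e := hres r hrIcc.1 hrIcc.2
    rw [he, hres r' hrIcc'.1 hrIcc'.2] at e
    exact e.symm
  -- cardinality
  have hfin : (P ∩ arcCC (circum d) (x:ℝ) (y:ℝ)).Finite := hP.inter_of_left _
  have hsub : ↑(F.image f) ⊆ P ∩ arcCC (circum d) (x:ℝ) (y:ℝ) := by
    intro p hp
    rw [Finset.coe_image] at hp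
    obtain ⟨r, hr, rfl⟩ := hp
    exact ⟨hPmem r (Finset.mem_coe.mp hr), harc r (Finset.mem_coe.mp hr)⟩
  have hle : (F.image f).card ≤ (P ∩ arcCC (circum d) (x:ℝ) (y:ℝ)).ncard := by
    rw [← Set.ncard_coe_finset]
    exact Set.ncard_le_ncard hsub hfin
  have hcard1 : (F.image f).card = F.card := Finset.card_image_of_injOn hinj
  have hFcard : (d:ℤ) ≤ 5 * (F.card : ℤ) := by
    have h1 : (Finset.Icc lo hi).card - 1 ≤ F.card := Finset.pred_card_le_card_erase
    rw [Int.card_Icc] at h1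
    omega
  have hfinal : (d:ℤ) ≤ 5 * ((P ∩ arcCC (circum d) (x:ℝ) (y:ℝ)).ncard : ℤ) := by
    rw [hcard1] at hle
    omega
  have hR : (d:ℝ) ≤ 5 * ((P ∩ arcCC (circum d) (x:ℝ) (y:ℝ)).ncard : ℝ) := by exact_mod_cast hfinal
  linarith

lemma decomp (d : ℕ) (hd : 200 ≤ d) (w : ℤ) (hw0 : 0 ≤ w) (hwn : w < (d:ℤ)^2) :
    ∃ a b : ℤ, 0 ≤ a ∧ a < (d:ℤ) ∧ 0 ≤ b ∧ b < (d:ℤ) ∧ w = a * (d:ℤ) + b ∧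
      (b - a = w % ((d:ℤ)+1) ∨ b - a = w % ((d:ℤ)+1) - ((d:ℤ)+1)) := by
  have hdpos : (0:ℤ) < (d:ℤ) := by omega
  refine ⟨w / (d:ℤ), w % (d:ℤ), Int.ediv_nonneg hw0 (le_of_lt hdpos), ?_, Int.emod_nonneg w (ne_of_gt hdpos), Int.emod_lt_of_pos w hdpos, ?_, ?_⟩
  · set a := w / (d:ℤ)
    have hw : (d:ℤ) * a + w % (d:ℤ) = w := Int.mul_ediv_add_emod w d
    have hb := Int.emod_nonneg w (ne_of_gt hdpos)
    by_contra hcon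
    push_neg at hcon
    nlinarith
  · have hw : (d:ℤ) * (w / (d:ℤ)) + w % (d:ℤ) = w := Int.mul_ediv_add_emod w d
    linarith [mul_comm (w / (d:ℤ)) (d:ℤ)]
  · set a := w / (d:ℤ) with ha_def
    set b := w % (d:ℤ) with hb_def
    have hw : (d:ℤ) * a + b = w := Int.mul_ediv_add_emod w d
    have ha0 : 0 ≤ a := Int.ediv_nonneg hw0 (le_of_lt hdpos)
    have hb0 : 0 ≤ b := Int.emod_nonneg w (ne_of_gt hdpos)
    have hbd : b < (d:ℤ) := Int.emod_lt_of_pos w hdpos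
    have had : a < (d:ℤ) := by nlinarith
    have hres : w % ((d:ℤ)+1) = (b - a) % ((d:ℤ)+1) := by
      have e1 : w = (b - a) + ((d:ℤ)+1) * a := by rw [← hw]; ring
      calc w % ((d:ℤ)+1) = ((b - a) + ((d:ℤ)+1) * a) % ((d:ℤ)+1) := by rw [← e1]
        _ = (b - a) % ((d:ℤ)+1) := by rw [Int.add_mul_emod_self_left]
    set r := w % ((d:ℤ)+1) with hr_def
    have hm : (0:ℤ) < (d:ℤ)+1 := by omega
    have hr0 : 0 ≤ r := Int.emod_nonneg w (ne_of_gt hm)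
    have hrd : r < (d:ℤ)+1 := Int.emod_lt_of_pos w hm
    have hdvd : ((d:ℤ)+1) ∣ ((b - a) - r) := by
      apply Int.dvd_of_emod_eq_zero
      rw [Int.sub_emod, ← hres, Int.emod_emod_of_dvd _ dvd_rfl, sub_self, Int.zero_emod]
    obtain ⟨z, hz⟩ := hdvd
    have hz1 : z < 1 := by nlinarith
    have hz2 : -2 < z := by nlinarith
    have : z = 0 ∨ z = -1 := by omega
    rcases this with h | h
    · left; rw [h] at hz; omega
    · right; rw [h] at hz; linarith

lemma memRIdx (d : ℕ) (hd : 200 ≤ d) (i j : ℤ) (h0i : 0 ≤ i) (h0j : 0 ≤ j)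
    (hid : i < (d:ℤ)) (hjd : j < (d:ℤ))
    (h : (2 ≤ j - i ∧ 4*(j-i) ≤ (d:ℤ)) ∨ (2 ≤ i - j ∧ 3*(d:ℤ)+8 ≤ 4*(i-j))) :
    (i.toNat, j.toNat) ∈ RIdx d ∧ ipt d i.toNat j.toNat = ((i*(d:ℤ) + j : ℤ) : ℝ) ∧
      ipt d j.toNat i.toNat = ((j*(d:ℤ) + i : ℤ) : ℝ) := by
  have hdpos : (0:ℤ) < (d:ℤ) := by omega
  have hn : (0:ℤ) < (d:ℤ)^2 := by positivity
  have hci : ((i.toNat : ℕ) : ℝ) = ((i:ℤ):ℝ) := by exact_mod_cast congrArg (Int.cast : ℤ → ℝ) (Int.toNat_of_nonneg h0i)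
  have hcj : ((j.toNat : ℕ) : ℝ) = ((j:ℤ):ℝ) := by exact_mod_cast congrArg (Int.cast : ℤ → ℝ) (Int.toNat_of_nonneg h0j)
  have hip1 : ipt d i.toNat j.toNat = ((i*(d:ℤ) + j : ℤ) : ℝ) := by
    rw [ipt, hci, hcj]; push_cast; ring
  have hip2 : ipt d j.toNat i.toNat = ((j*(d:ℤ) + i : ℤ) : ℝ) := by
    rw [ipt, hci, hcj]; push_cast; ring
  have hcirc : circum d = (((d:ℤ)^2 : ℤ) : ℝ) := by rw [circum]; push_cast; ring
  have hlen : arcLen (circum d) (ipt d i.toNat j.toNat) (ipt d j.toNat i.toNat)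
      = ((((j - i) * ((d:ℤ)-1)) % ((d:ℤ)^2) : ℤ) : ℝ) := by
    rw [arcLen, hip1, hip2, hcirc,
      show ((j*(d:ℤ) + i : ℤ) : ℝ) - ((i*(d:ℤ) + j : ℤ) : ℝ) = (((j - i) * ((d:ℤ)-1) : ℤ) : ℝ) by push_cast; ring]
    exact rmod_coe _ _ hn
  have hquarter : arcLen (circum d) (ipt d i.toNat j.toNat) (ipt d j.toNat i.toNat) ≤ circum d / 4 := by
    rw [hlen, hcirc, le_div_iff₀ (by norm_num : (0:ℝ) < 4)]
    rcases h with ⟨h1, h2⟩ | ⟨h1, h2⟩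
    · have he : ((j - i) * ((d:ℤ)-1)) % ((d:ℤ)^2) = (j - i) * ((d:ℤ)-1) :=
        Int.emod_eq_of_lt (by nlinarith) (by nlinarith)
      rw [he]
      have : (j - i) * ((d:ℤ)-1) * 4 ≤ (d:ℤ)^2 := by nlinarith
      exact_mod_cast this
    · have he : ((j - i) * ((d:ℤ)-1)) % ((d:ℤ)^2) = (j - i) * ((d:ℤ)-1) + (d:ℤ)^2 := by
        have e9 : ((j - i) * ((d:ℤ)-1)) % ((d:ℤ)^2) = ((j - i) * ((d:ℤ)-1) + (d:ℤ)^2 * 1) % ((d:ℤ)^2) := by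
          rw [Int.add_mul_emod_self_left]
        rw [e9, mul_one]
        exact Int.emod_eq_of_lt (by nlinarith) (by nlinarith)
      rw [he]
      have : ((j - i) * ((d:ℤ)-1) + (d:ℤ)^2) * 4 ≤ (d:ℤ)^2 := by nlinarith
      exact_mod_cast this
  refine ⟨⟨?_, ?_, ?_, hquarter⟩, hip1, hip2⟩
  · simp only; omega
  · simp only; omega
  · simp only; omega

lemma memStart (d : ℕ) (hd : 200 ≤ d) (k : ℤ) (hk1 : 4*k ≤ (d:ℤ) - 4) (hk2 : (d:ℤ) - 7 ≤ 4*k)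
    (w : ℤ) (hw0 : 0 ≤ w) (hwn : w < (d:ℤ)^2)
    (h1 : 2 ≤ w % ((d:ℤ)+1)) (h2 : w % ((d:ℤ)+1) ≤ k) :
    ((w:ℝ) : AddCircle (circum d)) ∈ startPts d := by
  obtain ⟨a, b, ha0, had, hb0, hbd, hw, hcase⟩ := decomp d hd w hw0 hwn
  have hr0 : 0 ≤ w % ((d:ℤ)+1) := h1.trans' (by norm_num)
  rcases hcase with h | h
  · obtain ⟨hR, hip1, _⟩ := memRIdx d hd a b ha0 hb0 had hbd (Or.inl ⟨by omega, by omega⟩)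
    exact ⟨(a.toNat, b.toNat), hR, by rw [hip1, hw]⟩
  · obtain ⟨hR, hip1, _⟩ := memRIdx d hd a b ha0 hb0 had hbd (Or.inr ⟨by omega, by omega⟩)
    exact ⟨(a.toNat, b.toNat), hR, by rw [hip1, hw]⟩

lemma memEnd (d : ℕ) (hd : 200 ≤ d) (k : ℤ) (hk1 : 4*k ≤ (d:ℤ) - 4) (hk2 : (d:ℤ) - 7 ≤ 4*k)
    (w : ℤ) (hw0 : 0 ≤ w) (hwn : w < (d:ℤ)^2)
    (h1 : (d:ℤ)+2-k ≤ w % ((d:ℤ)+1)) (h2 : w % ((d:ℤ)+1) ≤ (d:ℤ)-1) :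
    ((w:ℝ) : AddCircle (circum d)) ∈ endPts d := by
  obtain ⟨a, b, ha0, had, hb0, hbd, hw, hcase⟩ := decomp d hd w hw0 hwn
  rcases hcase with h | h
  · obtain ⟨hR, _, hip2⟩ := memRIdx d hd b a hb0 ha0 hbd had (Or.inr ⟨by omega, by omega⟩)
    exact ⟨(b.toNat, a.toNat), hR, by rw [hip2, hw]⟩
  · obtain ⟨hR, _, hip2⟩ := memRIdx d hd b a hb0 ha0 hbd had (Or.inl ⟨by omega, by omega⟩)
    exact ⟨(b.toNat, a.toNat), hR, by rw [hip2, hw]⟩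

lemma startPts_finite (d : ℕ) : (startPts d).Finite := by
  have h : startPts d ⊆ (fun q : ℕ × ℕ => ((ipt d q.1 q.2 : ℝ) : AddCircle (circum d))) '' (Set.Iio d ×ˢ Set.Iio d) := by
    rintro p ⟨q, hq, rfl⟩
    exact ⟨q, ⟨hq.1, hq.2.1⟩, rfl⟩
  exact (((Set.finite_Iio d).prod (Set.finite_Iio d)).image _).subset h

lemma endPts_finite (d : ℕ) : (endPts d).Finite := by
  have h : endPts d ⊆ (fun q : ℕ × ℕ => ((ipt d q.2 q.1 : ℝ) : AddCircle (circum d))) '' (Set.Iio d ×ˢ Set.Iio d) := by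
    rintro p ⟨q, hq, rfl⟩
    exact ⟨q, ⟨hq.1, hq.2.1⟩, rfl⟩
  exact (((Set.finite_Iio d).prod (Set.finite_Iio d)).image _).subset h

theorem arcs_starting_ending_points :
    ∃ D : ℕ, ∀ d : ℕ, D ≤ d → ∀ x y : ℤ,
      (d : ℝ) - 1 ≤ arcLen (circum d) (x : ℝ) (y : ℝ) →
      (d : ℝ) / 5 ≤ ((startPts d ∩ arcCC (circum d) (x : ℝ) (y : ℝ)).ncard : ℝ) ∧
      (d : ℝ) / 5 ≤ ((endPts d ∩ arcCC (circum d) (x : ℝ) (y : ℝ)).ncard : ℝ) := by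
  refine ⟨200, fun d hd x y hlen => ?_⟩
  have hdZ : (200:ℤ) ≤ (d:ℤ) := by exact_mod_cast hd
  have hn : (0:ℤ) < (d:ℤ)^2 := by positivity
  have hcirc : circum d = (((d:ℤ)^2 : ℤ) : ℝ) := by rw [circum]; push_cast; ring
  have hlenZ : (d:ℤ) - 1 ≤ (y - x) % ((d:ℤ)^2) := by
    have e : arcLen (circum d) (x:ℝ) (y:ℝ) = (((y - x) % ((d:ℤ)^2) : ℤ) : ℝ) := by
      rw [arcLen, hcirc, show ((y:ℝ) - (x:ℝ)) = (((y - x : ℤ)):ℝ) by push_cast; ring,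
        rmod_coe _ _ hn]
    rw [e] at hlen
    exact_mod_cast hlen
  set k : ℤ := (d:ℤ)/4 - 1 with hk_def
  have hk1 : 4*k ≤ (d:ℤ) - 4 := by omega
  have hk2 : (d:ℤ) - 7 ≤ 4*k := by omega
  constructor
  · exact countCore d hd x y hlenZ (startPts d) (startPts_finite d) 3 k (by omega) (by omega)
      (by omega)
      (fun w hw0 hwn hr1 hr2 => memStart d hd k hk1 hk2 w hw0 hwn (by omega) hr2)
  · exact countCore d hd x y hlenZ (endPts d) (endPts_finite d) ((d:ℤ)+3-k) ((d:ℤ)-1) (by omega)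
      (by omega) (by omega)
      (fun w hw0 hwn hr1 hr2 => memEnd d hd k hk1 hk2 w hw0 hwn (by omega) hr2)
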